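/- For all natural numbers E ≥ 2 and n ≥ 2, ∑_{k=2}^{E−1} (−1)^k · C(E−1, k) · C(n+E−1−k, E−1) = (E−2)·C(n+E−2, E−1) − C(n+E−2, E−2) + 1, as an identity of integers. -/

import Mathlib

/-- Finite-difference identity:
`∑_{k=0}^m (-1)^k C(m,k) C(x+m-k, m+d) = C(x,d)`. -/
lemma findiff (m : ℕ) : ∀ d x : ℕ,
    ∑ k ∈ Finset.range (m + 1),
        (-1 : ℤ) ^ k * (m.choose k : ℤ) * (((x + m - k).choose (m + d)) : ℤ)
      = (x.choose d : ℤ) := by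
  induction m with
  | zero => intro d x; simp
  | succ m ih =>
    intro d x
    rw [Finset.sum_range_succ']
    have hcongr : ∀ j ∈ Finset.range (m + 1),
        (-1 : ℤ) ^ (j + 1) * (((m + 1).choose (j + 1)) : ℤ) *
            (((x + (m + 1) - (j + 1)).choose (m + 1 + d)) : ℤ)
          = -((-1 : ℤ) ^ j * (m.choose j : ℤ) * (((x + m - j).choose (m + (d + 1))) : ℤ))
            + (-1 : ℤ) ^ (j + 1) * ((m.choose (j + 1)) : ℤ) *
                ((((x + 1) + m - (j + 1)).choose (m + (d + 1))) : ℤ) := by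
      intro j hj
      rw [Finset.mem_range] at hj
      have h1 : x + (m + 1) - (j + 1) = x + m - j := by omega
      have h2 : (x + 1) + m - (j + 1) = x + m - j := by omega
      have h3 : m + 1 + d = m + (d + 1) := by omega
      rw [h1, h2, h3, Nat.choose_succ_succ]
      push_cast
      ring
    rw [Finset.sum_congr rfl hcongr, Finset.sum_add_distrib, Finset.sum_neg_distrib,
      ih (d + 1) x]
    have hA : (∑ j ∈ Finset.range (m + 1),
          (-1 : ℤ) ^ (j + 1) * ((m.choose (j + 1)) : ℤ) *
            ((((x + 1) + m - (j + 1)).choose (m + (d + 1))) : ℤ))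
        + (-1 : ℤ) ^ 0 * (((m + 1).choose 0) : ℤ) *
            (((x + (m + 1) - 0).choose (m + 1 + d)) : ℤ)
        = ((x + 1).choose (d + 1) : ℤ) := by
      have key := ih (d + 1) (x + 1)
      rw [Finset.sum_range_succ'] at key
      rw [Finset.sum_range_succ]
      have hm0 : (-1 : ℤ) ^ (m + 1) * ((m.choose (m + 1)) : ℤ) *
          ((((x + 1) + m - (m + 1)).choose (m + (d + 1))) : ℤ) = 0 := by
        simp [Nat.choose_succ_self]
      rw [hm0]
      have hf0 : (-1 : ℤ) ^ 0 * (((m + 1).choose 0) : ℤ) *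
          (((x + (m + 1) - 0).choose (m + 1 + d)) : ℤ)
          = (-1 : ℤ) ^ 0 * ((m.choose 0) : ℤ) *
            ((((x + 1) + m - 0).choose (m + (d + 1))) : ℤ) := by
        have h4 : x + (m + 1) - 0 = (x + 1) + m - 0 := by omega
        have h3 : m + 1 + d = m + (d + 1) := by omega
        rw [h4, h3]; simp
      rw [hf0]
      linarith [key]
    rw [add_assoc, hA]
    have := Nat.choose_succ_succ (x) (d)
    have hp : ((x + 1).choose (d + 1) : ℤ) = (x.choose d : ℤ) + (x.choose (d + 1) : ℤ) := by
      rw [Nat.choose_succ_succ]; push_cast; ring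
    rw [hp]; ring

/-- Closed-form evaluation of `β_n^E`, the number of independent anyon phases for
`n` particles on a star graph with `E` edges:
`∑_{k=2}^{E−1} (−1)^k C(E−1,k) C(n+E−1−k, E−1) = (E−2)·C(n+E−2, E−1) − C(n+E−2, E−2) + 1`. -/
theorem star_beta_closed_form (E n : ℕ) (hE : 2 ≤ E) (hn : 2 ≤ n) :
    ∑ k ∈ Finset.Icc 2 (E - 1),
        (-1 : ℤ) ^ k * ((E - 1).choose k) * ((n + E - 1 - k).choose (E - 1))
      = ((E : ℤ) - 2) * ((n + E - 2).choose (E - 1)) - ((n + E - 2).choose (E - 2)) + 1 := by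
  obtain ⟨m, rfl⟩ : ∃ m, E = m + 2 := ⟨E - 2, by omega⟩
  obtain ⟨p, rfl⟩ : ∃ p, n = p + 2 := ⟨n - 2, by omega⟩
  have hfull := findiff (m + 1) 0 (p + 2)
  -- rewrite the full sum: split off k = 0 and k = 1
  have hsplit : ∑ k ∈ Finset.range (m + 2),
        (-1 : ℤ) ^ k * ((m + 1).choose k : ℤ) * (((p + 2 + (m + 1) - k).choose (m + 1 + 0)) : ℤ)
      = (((p + m + 3).choose (m + 1)) : ℤ)
        + (-((m : ℤ) + 1)) * (((p + m + 2).choose (m + 1)) : ℤ)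
        + ∑ k ∈ Finset.Icc 2 (m + 1),
            (-1 : ℤ) ^ k * ((m + 1).choose k : ℤ) *
              (((p + 2 + (m + 1) - k).choose (m + 1 + 0)) : ℤ) := by
    rw [Finset.range_eq_Ico, ← Finset.sum_Ico_consecutive _ (by omega : 0 ≤ 2) (by omega : 2 ≤ m + 2)]
    have h0 : Finset.Ico 0 2 = {0, 1} := by decide
    have h1 : Finset.Ico 2 (m + 2) = Finset.Icc 2 (m + 1) := by
      exact Finset.Ico_add_one_right_eq_Icc ..
    rw [h0, h1]
    congr 1
    rw [Finset.sum_insert (by decide), Finset.sum_singleton]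
    have e0 : p + 2 + (m + 1) - 0 = p + m + 3 := by omega
    have e1 : p + 2 + (m + 1) - 1 = p + m + 2 := by omega
    rw [e0, e1]
    simp [Nat.choose_one_right]
  rw [hsplit] at hfull
  have hmatch : ∑ k ∈ Finset.Icc 2 (m + 2 - 1),
        (-1 : ℤ) ^ k * (((m + 2 - 1).choose k) : ℤ) * (((p + 2 + (m + 2) - 1 - k).choose (m + 2 - 1)) : ℤ)
      = ∑ k ∈ Finset.Icc 2 (m + 1),
          (-1 : ℤ) ^ k * ((m + 1).choose k : ℤ) *
            (((p + 2 + (m + 1) - k).choose (m + 1 + 0)) : ℤ) := by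
    apply Finset.sum_congr (by congr 1)
    intro k hk
    rw [Finset.mem_Icc] at hk
    have e1 : m + 2 - 1 = m + 1 := by omega
    have e2 : p + 2 + (m + 2) - 1 - k = p + 2 + (m + 1) - k := by omega
    rw [e1, e2]
  rw [hmatch]
  have hIcc : ∑ k ∈ Finset.Icc 2 (m + 1),
        (-1 : ℤ) ^ k * ((m + 1).choose k : ℤ) *
          (((p + 2 + (m + 1) - k).choose (m + 1 + 0)) : ℤ)
      = ((p + 2).choose 0 : ℤ) - (((p + m + 3).choose (m + 1)) : ℤ)
        + ((m : ℤ) + 1) * (((p + m + 2).choose (m + 1)) : ℤ) := by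
    linarith [hfull]
  rw [hIcc]
  have e3 : p + 2 + (m + 2) - 2 = p + m + 2 := by omega
  have e4 : m + 2 - 1 = m + 1 := by omega
  have e5 : m + 2 - 2 = m := by omega
  rw [e3, e4, e5]
  have hp : ((p + m + 3).choose (m + 1) : ℤ)
      = ((p + m + 2).choose m : ℤ) + ((p + m + 2).choose (m + 1) : ℤ) := by
    have : p + m + 3 = (p + m + 2) + 1 := by omega
    rw [this, Nat.choose_succ_succ]
    push_cast; ring
  rw [hp]
  simp
  ring
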